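/- For any λ⃗ ∈ P_{r,n}, the map φ_λ⃗ sending a reverse semi-standard Young r-tableau T to the pair (T, Δ) — where T is the standardization and Δ_i = (θ_i − f_i(T) − θ_{i+1} + f_{i+1}(T))/r with θ_{n+1} = 1 — is a bijection from RSSYT(λ⃗) onto SYT(λ⃗) × N^n, and moreover θ_i − 1 = f_i(T) + Σ_{j ≥ i} r·Δ_j for all i ∈ [n]. -/

import Mathlib

namespace Tableaux

/-- Descent of a placement `pos : Fin n → Fin r × ℕ × ℕ` (entry `j+1` ↦ (component, row,
column)) at the (0-indexed) position `j`: entry `j+2` lies strictly below entry `j+1`,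
i.e. in a later component, or in the same component and a lower row. -/
def isDescT {n r : ℕ} (pos : Fin n → Fin r × ℕ × ℕ) (j : ℕ) : Prop :=
  ∃ h : j + 1 < n,
    (pos ⟨j, Nat.lt_of_succ_lt h⟩).1 < (pos ⟨j + 1, h⟩).1 ∨
      ((pos ⟨j, Nat.lt_of_succ_lt h⟩).1 = (pos ⟨j + 1, h⟩).1 ∧
        (pos ⟨j, Nat.lt_of_succ_lt h⟩).2.1 < (pos ⟨j + 1, h⟩).2.1)

instance {n r : ℕ} (pos : Fin n → Fin r × ℕ × ℕ) (j : ℕ) : Decidable (isDescT pos j) := by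
  unfold isDescT; exact exists_prop_decidable _

/-- The descent set (0-indexed positions). -/
def DesT {n r : ℕ} (pos : Fin n → Fin r × ℕ × ℕ) : Finset ℕ :=
  (Finset.range n).filter (isDescT pos)

/-- `dT pos i` : the number of (1-indexed) descents `≥ i`. -/
def dT {n r : ℕ} (pos : Fin n → Fin r × ℕ × ℕ) (i : ℕ) : ℕ :=
  ((DesT pos).filter fun j => i ≤ j + 1).card

/-- `fT pos i` is the paper's `f_{i+1}(T) = r·d_{i+1}(T) + c_{i+1}(T)` (0-indexed `i`),
where `c` is the index of the component containing the entry. -/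
def fT {n r : ℕ} (pos : Fin n → Fin r × ℕ × ℕ) (i : Fin n) : ℕ :=
  r * dT pos ((i : ℕ) + 1) + ((pos i).1 : ℕ)

/-- A standard Young `r`-tableau of shape `Λ = (Λ^0,…,Λ^{r-1})` with entries `1,…,n`:
`pos` records the (component, row, column) of each entry; the filling is a bijection onto
the cells and is increasing along rows and down columns of each component. -/
structure SYTr (n r : ℕ) (Λ : Fin r → YoungDiagram) where
  pos : Fin n → Fin r × ℕ × ℕ
  mem_cells : ∀ i, ((pos i).2.1, (pos i).2.2) ∈ Λ (pos i).1
  inj : Function.Injective pos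
  surj : ∀ (k : Fin r) (c : ℕ × ℕ), c ∈ Λ k → ∃ i, pos i = (k, c.1, c.2)
  row_inc : ∀ i j : Fin n, (pos i).1 = (pos j).1 → (pos i).2.1 = (pos j).2.1 →
    (pos i).2.2 < (pos j).2.2 → i < j
  col_inc : ∀ i j : Fin n, (pos i).1 = (pos j).1 → (pos i).2.2 = (pos j).2.2 →
    (pos i).2.1 < (pos j).2.1 → i < j

end Tableaux

namespace Tableaux

/-- A reverse semi-standard Young `r`-tableau of shape `Λ`: an `r`-tuple of reverse
semi-standard fillings (entries weakly decreasing along rows, strictly decreasing down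
columns) in which every entry of the `k`-th component is `≡ k+1 (mod r)`. -/
structure RSSYTr (n r : ℕ) (Λ : Fin r → YoungDiagram) where
  entry : Fin r → ℕ → ℕ → ℕ
  pos_entry : ∀ k i j, (i, j) ∈ Λ k → 0 < entry k i j
  zero_entry : ∀ k i j, (i, j) ∉ Λ k → entry k i j = 0
  row_weak : ∀ k i j1 j2, j1 ≤ j2 → (i, j2) ∈ Λ k → entry k i j2 ≤ entry k i j1
  col_strict : ∀ k i1 i2 j, i1 < i2 → (i2, j) ∈ Λ k → entry k i2 j < entry k i1 j
  congr_mod : ∀ k i j, (i, j) ∈ Λ k → entry k i j % r = ((k : ℕ) + 1) % r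

/-- All the entries of a reverse semi-standard `r`-tableau, in weakly decreasing order. -/
noncomputable def entriesList {n r : ℕ} (Λ : Fin r → YoungDiagram) (T : RSSYTr n r Λ) :
    List ℕ :=
  (Multiset.sort
    (∑ k : Fin r, ((Λ k).cells.val.map fun c => T.entry k c.1 c.2)) (· ≤ ·)).reverse

/-- The entries partition `θ(T) = (θ_1 ≥ θ_2 ≥ ⋯ ≥ θ_n)`. -/
noncomputable def thetaP {n r : ℕ} (Λ : Fin r → YoungDiagram) (T : RSSYTr n r Λ)
    (i : ℕ) : ℕ :=
  (entriesList Λ T).getD i 0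

end Tableaux


namespace Tableaux

open Finset

variable {n r : ℕ} {Λ : Fin r → YoungDiagram}

/-- All cells of the `r`-tuple of diagrams, as triples `(component, row, column)`. -/
def cellsF (r : ℕ) (Λ : Fin r → YoungDiagram) : Finset (Fin r × ℕ × ℕ) :=
  (Finset.univ.sigma fun k => (Λ k).cells).map
    ⟨fun x => (x.1, x.2), by rintro ⟨a, b⟩ ⟨c, d⟩ h
                             simp only [Prod.mk.injEq] at h
                             obtain ⟨h1, h2⟩ := h; subst h1; simp [h2]⟩

lemma mem_cellsF {p : Fin r × ℕ × ℕ} : p ∈ cellsF r Λ ↔ (p.2.1, p.2.2) ∈ Λ p.1 := by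
  obtain ⟨k, a, b⟩ := p
  constructor
  · intro h
    simp only [cellsF, Finset.mem_map, Finset.mem_sigma, Function.Embedding.coeFn_mk] at h
    obtain ⟨⟨k', c⟩, ⟨-, hc⟩, heq⟩ := h
    rw [Prod.ext_iff] at heq
    obtain ⟨h1, h2⟩ := heq
    simp only at h1 h2
    subst h1; rw [← h2]; exact hc
  · intro h
    simp only [cellsF, Finset.mem_map, Finset.mem_sigma, Function.Embedding.coeFn_mk]
    exact ⟨⟨k, (a, b)⟩, ⟨Finset.mem_univ _, by simpa using h⟩, rfl⟩

lemma card_cellsF (hcard : ∑ k : Fin r, (Λ k).card = n) : (cellsF r Λ).card = n := by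
  rw [cellsF, Finset.card_map, Finset.card_sigma]
  simpa [YoungDiagram.card] using hcard

/-- Injectivity of `k ↦ (k+1) % r` on `Fin r`. -/
lemma comp_mod_inj (k k' : Fin r) (h : ((k : ℕ) + 1) % r = ((k' : ℕ) + 1) % r) : k = k' := by
  have hk := k.2; have hk' := k'.2
  have e1 : ((k : ℕ) + 1) % r = if (k : ℕ) + 1 = r then 0 else (k : ℕ) + 1 := by
    split
    · simp_all
    · exact Nat.mod_eq_of_lt (by omega)
  have e2 : ((k' : ℕ) + 1) % r = if (k' : ℕ) + 1 = r then 0 else (k' : ℕ) + 1 := by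
    split
    · simp_all
    · exact Nat.mod_eq_of_lt (by omega)
  rw [e1, e2] at h
  apply Fin.ext
  split at h <;> split at h <;> omega

lemma mod_eq_of_lt_add {a b : ℕ} (hr : 0 < r) (h : a % r = b % r) (hlt : b < a) :
    b + r ≤ a := by
  have hd : r ∣ a - b := (Nat.modEq_iff_dvd' hlt.le).mp h.symm
  obtain ⟨c, hc⟩ := hd
  rcases Nat.eq_zero_or_pos c with rfl | h0
  · simp at hc; omega
  · have : r ≤ r * c := Nat.le_mul_of_pos_right r h0
    omega

/-- The key of a cell: entry (decreasing) then column (increasing). -/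
def keyT (T : RSSYTr n r Λ) (p : Fin r × ℕ × ℕ) : Lex (ℕᵒᵈ × ℕ) :=
  toLex (OrderDual.toDual (T.entry p.1 p.2.1 p.2.2), p.2.2)

lemma keyT_lt_iff (T : RSSYTr n r Λ) (p q : Fin r × ℕ × ℕ) :
    keyT T p < keyT T q ↔
      T.entry q.1 q.2.1 q.2.2 < T.entry p.1 p.2.1 p.2.2 ∨
        (T.entry p.1 p.2.1 p.2.2 = T.entry q.1 q.2.1 q.2.2 ∧ p.2.2 < q.2.2) := by
  rw [keyT, keyT, Prod.Lex.lt_iff]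
  simp

/-- Entries determine the component (residues mod `r` differ across components). -/
lemma comp_eq_of_entry_eq (hr : 0 < r) (T : RSSYTr n r Λ) {p q : Fin r × ℕ × ℕ}
    (hp : p ∈ cellsF r Λ) (hq : q ∈ cellsF r Λ)
    (h : T.entry p.1 p.2.1 p.2.2 = T.entry q.1 q.2.1 q.2.2) : p.1 = q.1 := by
  have h1 := T.congr_mod p.1 p.2.1 p.2.2 (mem_cellsF.mp hp)
  have h2 := T.congr_mod q.1 q.2.1 q.2.2 (mem_cellsF.mp hq)
  exact comp_mod_inj _ _ (by rw [← h1, ← h2, h])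

lemma keyT_injOn (hr : 0 < r) (T : RSSYTr n r Λ) {p q : Fin r × ℕ × ℕ}
    (hp : p ∈ cellsF r Λ) (hq : q ∈ cellsF r Λ) (h : keyT T p = keyT T q) : p = q := by
  have hent : T.entry p.1 p.2.1 p.2.2 = T.entry q.1 q.2.1 q.2.2 := by
    have := congrArg (fun x => OrderDual.ofDual (ofLex x).1) h
    simpa [keyT] using this
  have hcol : p.2.2 = q.2.2 := by
    have := congrArg (fun x => (ofLex x).2) h
    simpa [keyT] using this
  have hcomp : p.1 = q.1 := comp_eq_of_entry_eq hr T hp hq hent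
  obtain ⟨k, a, b⟩ := p; obtain ⟨k', a', b'⟩ := q
  simp only at hcomp hcol hent
  subst hcomp; subst hcol
  suffices hrow : a = a' by simp [hrow]
  by_contra hne
  rcases Nat.lt_or_ge a a' with hlt | hge
  · exact absurd hent (Nat.ne_of_gt (T.col_strict k a a' b hlt (mem_cellsF.mp hq)))
  · have hlt : a' < a := by omega
    exact absurd hent.symm (Nat.ne_of_gt (T.col_strict k a' a b hlt (mem_cellsF.mp hp)))

end Tableaux

namespace Tableaux

open Finset

variable {n r : ℕ} {Λ : Fin r → YoungDiagram}

lemma map_val_eq_sum {β : Type*} (s : Finset β) (f : β → ℕ) :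
    (s.val.map f : Multiset ℕ) = ∑ x ∈ s, ({f x} : Multiset ℕ) := by
  rw [Finset.sum]
  rw [show (s.val.map fun x => ({f x} : Multiset ℕ)) =
    Multiset.map (fun a => ({a} : Multiset ℕ)) (s.val.map f) by rw [Multiset.map_map]; rfl]
  rw [Multiset.sum_map_singleton]

/-- The multiset of entries of `T` equals the multiset of entries read along the cells
of any standard tableau `S`. -/
lemma entries_multiset (T : RSSYTr n r Λ) (S : SYTr n r Λ) :
    (∑ k : Fin r, ((Λ k).cells.val.map fun c => T.entry k c.1 c.2)) =
      Finset.univ.val.map fun m : Fin n =>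
        T.entry (S.pos m).1 (S.pos m).2.1 (S.pos m).2.2 := by
  classical
  rw [map_val_eq_sum]
  have : ∀ k : Fin r, ((Λ k).cells.val.map fun c => T.entry k c.1 c.2) =
      ∑ c ∈ (Λ k).cells, ({T.entry k c.1 c.2} : Multiset ℕ) := fun k => map_val_eq_sum _ _
  simp only [this]
  rw [Finset.sum_sigma' Finset.univ (fun k => (Λ k).cells)
    (fun k c => ({T.entry k c.1 c.2} : Multiset ℕ))]
  refine Finset.sum_bij (fun x hx => (S.surj x.1 x.2 (by simpa using (Finset.mem_sigma.mp hx).2)).choose) ?_ ?_ ?_ ?_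
  · intro x hx; exact Finset.mem_univ _
  · intro x hx y hy hxy
    have hx' := (S.surj x.1 x.2 (by simpa using (Finset.mem_sigma.mp hx).2)).choose_spec
    have hy' := (S.surj y.1 y.2 (by simpa using (Finset.mem_sigma.mp hy).2)).choose_spec
    rw [hxy, hy'] at hx'
    rw [Prod.ext_iff, Prod.ext_iff] at hx'
    obtain ⟨h1, h2, h3⟩ := hx'
    simp only at h1 h2 h3
    exact Sigma.ext h1.symm (by cases x; cases y; simp only at h1 h2 h3 ⊢; subst h1
                                simp [Prod.ext_iff, h2.symm, h3.symm])
  · intro m hm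
    refine ⟨⟨(S.pos m).1, (S.pos m).2⟩, Finset.mem_sigma.mpr ⟨Finset.mem_univ _, by simpa using S.mem_cells m⟩, ?_⟩
    apply S.inj
    have := (S.surj (S.pos m).1 (S.pos m).2 (by simpa using S.mem_cells m)).choose_spec
    rw [this]
  · intro x hx
    have hx' := (S.surj x.1 x.2 (by simpa using (Finset.mem_sigma.mp hx).2)).choose_spec
    rw [hx']

/-- If the entries read along `S` are weakly decreasing, then `entriesList` is exactly that
reading. -/
lemma entriesList_eq_ofFn (T : RSSYTr n r Λ) (S : SYTr n r Λ)
    (hmono : ∀ m m' : Fin n, m ≤ m' →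
      T.entry (S.pos m').1 (S.pos m').2.1 (S.pos m').2.2 ≤
        T.entry (S.pos m).1 (S.pos m).2.1 (S.pos m).2.2) :
    entriesList Λ T =
      List.ofFn (fun m => T.entry (S.pos m).1 (S.pos m).2.1 (S.pos m).2.2) := by
  classical
  set f : Fin n → ℕ := fun m => T.entry (S.pos m).1 (S.pos m).2.1 (S.pos m).2.2 with hf
  have hM : (∑ k : Fin r, ((Λ k).cells.val.map fun c => T.entry k c.1 c.2)) =
      ((List.ofFn f).reverse : Multiset ℕ) := by
    rw [entries_multiset T S, Multiset.coe_reverse]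
    have : Finset.univ.val = ((List.finRange n : List (Fin n)) : Multiset (Fin n)) := rfl
    rw [this, Multiset.map_coe, List.ofFn_eq_map]
  have hsorted : List.Pairwise (· ≤ ·) ((List.ofFn f).reverse) := by
    rw [List.pairwise_reverse]
    rw [List.pairwise_ofFn]
    intro i j hij
    exact hmono i j hij.le
  have : Multiset.sort
      (∑ k : Fin r, ((Λ k).cells.val.map fun c => T.entry k c.1 c.2)) (· ≤ ·) =
      (List.ofFn f).reverse := by
    apply List.Perm.eq_of_pairwise' (Multiset.pairwise_sort _ _) hsorted
    rw [← Multiset.coe_eq_coe, Multiset.sort_eq, hM]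
  rw [entriesList, this, List.reverse_reverse]

lemma thetaP_eq_of_mono (T : RSSYTr n r Λ) (S : SYTr n r Λ)
    (hmono : ∀ m m' : Fin n, m ≤ m' →
      T.entry (S.pos m').1 (S.pos m').2.1 (S.pos m').2.2 ≤
        T.entry (S.pos m).1 (S.pos m).2.1 (S.pos m).2.2) (m : Fin n) :
    thetaP Λ T (m : ℕ) = T.entry (S.pos m).1 (S.pos m).2.1 (S.pos m).2.2 := by
  rw [thetaP, entriesList_eq_ofFn T S hmono]
  rw [List.getD_eq_getElem?_getD, List.getElem?_eq_getElem (by simp [m.2]), List.getElem_ofFn]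
  simp

end Tableaux

namespace Tableaux

open Finset

variable {n r : ℕ} {Λ : Fin r → YoungDiagram}

lemma mem_DesT {pos : Fin n → Fin r × ℕ × ℕ} {j : ℕ} :
    j ∈ DesT pos ↔ isDescT pos j := by
  classical
  rw [DesT, Finset.mem_filter, Finset.mem_range]
  constructor
  · exact fun h => h.2
  · intro h; exact ⟨by obtain ⟨hlt, -⟩ := h; omega, h⟩

lemma dT_succ (pos : Fin n → Fin r × ℕ × ℕ) (i : ℕ) :
    dT pos (i + 1) = dT pos (i + 2) + if isDescT pos i then 1 else 0 := by
  classical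
  rw [dT, dT]
  have hsplit : ((DesT pos).filter fun j => i + 1 ≤ j + 1) =
      ((DesT pos).filter fun j => i + 2 ≤ j + 1) ∪ ((DesT pos).filter fun j => j = i) := by
    ext j
    simp only [Finset.mem_filter, Finset.mem_union]
    constructor
    · rintro ⟨hm, hle⟩
      rcases Nat.lt_or_ge j (i + 1) with h | h
      · exact Or.inr ⟨hm, by omega⟩
      · exact Or.inl ⟨hm, by omega⟩
    · rintro (⟨hm, hle⟩ | ⟨hm, rfl⟩)
      · exact ⟨hm, by omega⟩
      · exact ⟨hm, by omega⟩
  rw [hsplit, Finset.card_union_of_disjoint]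
  · congr 1
    split
    · next h =>
      rw [show ((DesT pos).filter fun j => j = i) = {i} from ?_, Finset.card_singleton]
      ext j
      simp only [Finset.mem_filter, Finset.mem_singleton]
      constructor
      · exact fun hh => hh.2
      · rintro rfl; exact ⟨mem_DesT.mpr h, rfl⟩
    · next h =>
      rw [show ((DesT pos).filter fun j => j = i) = ∅ from ?_, Finset.card_empty]
      ext j
      simp only [Finset.mem_filter, Finset.notMem_empty, iff_false, not_and]
      rintro hm rfl
      exact h (mem_DesT.mp hm)
  · rw [Finset.disjoint_filter]
    intro j hj h1 h2
    omega

lemma dT_last (pos : Fin n → Fin r × ℕ × ℕ) : dT pos n = 0 := by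
  classical
  rw [dT, Finset.card_eq_zero]
  ext j
  simp only [Finset.mem_filter, Finset.notMem_empty, iff_false, not_and]
  intro hm hle
  obtain ⟨h, -⟩ := mem_DesT.mp hm
  omega

/-- Step identity for `fT` at a descent. -/
lemma fT_step_desc (S : SYTr n r Λ) {i : ℕ} (h : i + 1 < n)
    (hd : isDescT S.pos i) :
    fT S.pos ⟨i, by omega⟩ + ((S.pos ⟨i + 1, h⟩).1 : ℕ) =
      fT S.pos ⟨i + 1, h⟩ + r + ((S.pos ⟨i, by omega⟩).1 : ℕ) := by
  rw [fT, fT]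
  have := dT_succ S.pos i
  rw [if_pos hd] at this
  simp only
  rw [show (i : ℕ) + 1 + 1 = i + 2 from rfl, this]
  ring

/-- Step identity for `fT` at a non-descent, plus weak decrease of components. -/
lemma fT_step_nondesc (S : SYTr n r Λ) {i : ℕ} (h : i + 1 < n)
    (hd : ¬ isDescT S.pos i) :
    fT S.pos ⟨i, by omega⟩ + ((S.pos ⟨i + 1, h⟩).1 : ℕ) =
      fT S.pos ⟨i + 1, h⟩ + ((S.pos ⟨i, by omega⟩).1 : ℕ) ∧
    ((S.pos ⟨i + 1, h⟩).1 : ℕ) ≤ ((S.pos ⟨i, by omega⟩).1 : ℕ) ∧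
    ((S.pos ⟨i + 1, h⟩).1 = (S.pos ⟨i, by omega⟩).1 →
      (S.pos ⟨i + 1, h⟩).2.1 ≤ (S.pos ⟨i, by omega⟩).2.1) := by
  have hnd : ¬ ((S.pos ⟨i, by omega⟩).1 < (S.pos ⟨i + 1, h⟩).1 ∨
      ((S.pos ⟨i, by omega⟩).1 = (S.pos ⟨i + 1, h⟩).1 ∧
        (S.pos ⟨i, by omega⟩).2.1 < (S.pos ⟨i + 1, h⟩).2.1)) := by
    intro hc
    exact hd ⟨h, hc⟩
  push_neg at hnd
  obtain ⟨h1, h2⟩ := hnd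
  refine ⟨?_, ?_, ?_⟩
  · rw [fT, fT]
    have := dT_succ S.pos i
    rw [if_neg hd] at this
    simp only
    rw [show (i : ℕ) + 1 + 1 = i + 2 from rfl, this]
    ring
  · exact Fin.le_def.mp h1
  · intro he; exact h2 he.symm

/-- The entry values determined by a standard tableau and `Δ`. -/
def thetaD (S : SYTr n r Λ) (Δ : Fin n → ℕ) (i : Fin n) : ℕ :=
  1 + fT S.pos i + r * ∑ j ∈ Finset.univ.filter fun j : Fin n => i ≤ j, Δ j

lemma filter_ge_split {i : Fin n} (h : (i : ℕ) + 1 < n) :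
    (Finset.univ.filter fun j : Fin n => i ≤ j) =
      insert i (Finset.univ.filter fun j : Fin n => (⟨(i : ℕ) + 1, h⟩ : Fin n) ≤ j) := by
  ext j
  simp only [Finset.mem_filter, Finset.mem_univ, true_and, Finset.mem_insert, Fin.le_def]
  constructor
  · intro hij
    rcases Nat.eq_or_lt_of_le hij with he | hlt
    · exact Or.inl (Fin.ext he.symm)
    · exact Or.inr (by simpa using hlt)
  · rintro (rfl | hij) <;> simp_all <;> omega

lemma sum_ge_split {i : Fin n} (h : (i : ℕ) + 1 < n) (Δ : Fin n → ℕ) :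
    ∑ j ∈ Finset.univ.filter (fun j : Fin n => i ≤ j), Δ j =
      Δ i + ∑ j ∈ Finset.univ.filter (fun j : Fin n => (⟨(i : ℕ) + 1, h⟩ : Fin n) ≤ j), Δ j := by
  rw [filter_ge_split h, Finset.sum_insert]
  simp only [Finset.mem_filter, Finset.mem_univ, true_and, Fin.le_def]
  omega

lemma filter_ge_last {i : Fin n} (h : ¬ ((i : ℕ) + 1 < n)) :
    (Finset.univ.filter fun j : Fin n => i ≤ j) = {i} := by
  ext j
  simp only [Finset.mem_filter, Finset.mem_univ, true_and, Finset.mem_singleton, Fin.le_def]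
  have := j.2
  have := i.2
  constructor
  · intro hij; apply Fin.ext; omega
  · rintro rfl; exact le_rfl

/-- One step of `thetaD`: weak decrease, strict by at least one across a descent. -/
lemma thetaD_step (S : SYTr n r Λ) (Δ : Fin n → ℕ) {i : ℕ} (h : i + 1 < n) :
    thetaD S Δ ⟨i + 1, h⟩ ≤ thetaD S Δ ⟨i, by omega⟩ ∧
      (isDescT S.pos i → thetaD S Δ ⟨i + 1, h⟩ + 1 ≤ thetaD S Δ ⟨i, by omega⟩) := by
  rw [thetaD, thetaD]
  have hsplit := sum_ge_split (i := ⟨i, by omega⟩) (by simpa using h) Δ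
  simp only at hsplit ⊢
  rw [hsplit]
  by_cases hd : isDescT S.pos i
  · have hstep := fT_step_desc S h hd
    have hc1 : ((S.pos ⟨i, by omega⟩).1 : ℕ) < r := (S.pos ⟨i, by omega⟩).1.2
    have hc2 : ((S.pos ⟨i + 1, h⟩).1 : ℕ) < r := (S.pos ⟨i + 1, h⟩).1.2
    constructor
    · nlinarith [Nat.zero_le (Δ ⟨i, by omega⟩)]
    · intro _; nlinarith [Nat.zero_le (Δ ⟨i, by omega⟩)]
  · obtain ⟨hstep, hc, -⟩ := fT_step_nondesc S h hd
    constructor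
    · nlinarith [Nat.zero_le (Δ ⟨i, by omega⟩)]
    · intro hcc; exact absurd hcc hd

end Tableaux

namespace Tableaux

open Finset

variable {n r : ℕ} {Λ : Fin r → YoungDiagram}

lemma thetaD_antitone (S : SYTr n r Λ) (Δ : Fin n → ℕ) :
    ∀ t : ℕ, ∀ a b : Fin n, (b : ℕ) = (a : ℕ) + t → thetaD S Δ b ≤ thetaD S Δ a := by
  intro t
  induction t with
  | zero => intro a b hab; rw [show b = a from Fin.ext (by omega)]
  | succ t ih =>
    intro a b hab
    have h1 : (a : ℕ) + t + 1 < n := by have := b.2; omega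
    have h2 : (a : ℕ) + t < n := by omega
    have hb : b = ⟨(a : ℕ) + t + 1, h1⟩ := Fin.ext (show (b : ℕ) = (a : ℕ) + t + 1 by omega)
    rw [hb]
    exact le_trans (thetaD_step S Δ (i := (a : ℕ) + t) h1).1 (ih a ⟨(a : ℕ) + t, h2⟩ rfl)

lemma thetaD_le_of_le (S : SYTr n r Λ) (Δ : Fin n → ℕ) {a b : Fin n} (hab : a ≤ b) :
    thetaD S Δ b ≤ thetaD S Δ a :=
  thetaD_antitone S Δ ((b : ℕ) - (a : ℕ)) a b (by have := Fin.le_def.mp hab; omega)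

/-- If there is no descent between `a` and `b`, the cell of `b` is weakly above the cell
of `a` (earlier component, or same component and weakly higher row). -/
lemma chain_nondesc (S : SYTr n r Λ) :
    ∀ t : ℕ, ∀ a b : Fin n, (b : ℕ) = (a : ℕ) + t →
      (∀ j : ℕ, (a : ℕ) ≤ j → j + 1 ≤ (b : ℕ) → ¬ isDescT S.pos j) →
      ((S.pos b).1 ≤ (S.pos a).1 ∧
        ((S.pos b).1 = (S.pos a).1 → (S.pos b).2.1 ≤ (S.pos a).2.1)) := by
  intro t
  induction t with
  | zero =>
    intro a b hab _
    rw [show b = a from Fin.ext (by omega)]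
    exact ⟨le_rfl, fun _ => le_rfl⟩
  | succ t ih =>
    intro a b hab hnd
    have h1 : (a : ℕ) + t + 1 < n := by have := b.2; omega
    have h2 : (a : ℕ) + t < n := by omega
    have hb : b = ⟨(a : ℕ) + t + 1, h1⟩ := Fin.ext (show (b : ℕ) = (a : ℕ) + t + 1 by omega)
    have hIH := ih a ⟨(a : ℕ) + t, h2⟩ rfl (fun j hj hj' => hnd j hj (by have hj'' : j + 1 ≤ (a : ℕ) + t := hj'; omega))
    have hlast : ¬ isDescT S.pos ((a : ℕ) + t) := hnd _ (by omega) (by omega)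
    obtain ⟨-, hcle, hrow⟩ := fT_step_nondesc S h1 hlast
    subst hb
    have hc1 : ((S.pos ⟨(a : ℕ) + t, h2⟩).1 : ℕ) ≤ ((S.pos a).1 : ℕ) := Fin.le_def.mp hIH.1
    constructor
    · exact Fin.le_def.mpr (by omega)
    · intro heq
      have hv : ((S.pos ⟨(a : ℕ) + t + 1, h1⟩).1 : ℕ) = ((S.pos a).1 : ℕ) :=
        congrArg Fin.val heq
      have hceq : (S.pos ⟨(a : ℕ) + t + 1, h1⟩).1 = (S.pos ⟨(a : ℕ) + t, h2⟩).1 :=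
        Fin.ext (by omega)
      have hceq2 : (S.pos ⟨(a : ℕ) + t, h2⟩).1 = (S.pos a).1 := Fin.ext (by omega)
      exact le_trans (hrow hceq) (hIH.2 hceq2)

/-- Strict inequality of `thetaD` when the cell of `b` lies strictly below the cell of `a`. -/
lemma thetaD_strict_below (S : SYTr n r Λ) (Δ : Fin n → ℕ) (a b : Fin n) (hlt : a < b)
    (hbelow : (S.pos a).1 < (S.pos b).1 ∨
      ((S.pos a).1 = (S.pos b).1 ∧ (S.pos a).2.1 < (S.pos b).2.1)) :
    thetaD S Δ b < thetaD S Δ a := by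
  by_cases hd : ∃ j : ℕ, (a : ℕ) ≤ j ∧ j + 1 ≤ (b : ℕ) ∧ isDescT S.pos j
  · obtain ⟨j, hj1, hj2, hj3⟩ := hd
    have hjn : j + 1 < n := by have := b.2; omega
    have hstrict := (thetaD_step S Δ hjn).2 hj3
    have hle1 : thetaD S Δ b ≤ thetaD S Δ ⟨j + 1, hjn⟩ :=
      thetaD_le_of_le S Δ (Fin.le_def.mpr (by simp; omega))
    have hle2 : thetaD S Δ ⟨j, by omega⟩ ≤ thetaD S Δ a :=
      thetaD_le_of_le S Δ (Fin.le_def.mpr (by simp; omega))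
    omega
  · exfalso
    push_neg at hd
    have hchain := chain_nondesc S ((b : ℕ) - (a : ℕ)) a b
      (by have := Fin.le_def.mp hlt.le; omega)
      (fun j hj1 hj2 => hd j hj1 hj2)
    rcases hbelow with hc | ⟨hc, hr⟩
    · exact absurd hchain.1 (not_le_of_gt hc)
    · exact absurd (hchain.2 hc.symm) (not_le_of_gt hr)

lemma thetaD_mod (S : SYTr n r Λ) (Δ : Fin n → ℕ) (i : Fin n) :
    thetaD S Δ i % r = (((S.pos i).1 : ℕ) + 1) % r := by
  rw [thetaD, fT]
  rw [show 1 + (r * dT S.pos ((i : ℕ) + 1) + ((S.pos i).1 : ℕ)) +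
      r * ∑ j ∈ Finset.univ.filter fun j : Fin n => i ≤ j, Δ j =
    ((S.pos i).1 : ℕ) + 1 +
      r * (dT S.pos ((i : ℕ) + 1) + ∑ j ∈ Finset.univ.filter fun j : Fin n => i ≤ j, Δ j)
    by ring]
  exact Nat.add_mul_mod_self_left _ _ _

lemma thetaD_pos (S : SYTr n r Λ) (Δ : Fin n → ℕ) (i : Fin n) : 0 < thetaD S Δ i := by
  rw [thetaD]; omega

/-- The entry function of the inverse map. -/
noncomputable def psiEntry (S : SYTr n r Λ) (Δ : Fin n → ℕ) : Fin r → ℕ → ℕ → ℕ :=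
  fun k a b =>
    if h : (a, b) ∈ Λ k then thetaD S Δ (S.surj k (a, b) h).choose else 0

lemma psiEntry_eq (S : SYTr n r Λ) (Δ : Fin n → ℕ) {k : Fin r} {a b : ℕ} {m : Fin n}
    (h : (a, b) ∈ Λ k) (hm : S.pos m = (k, a, b)) :
    psiEntry S Δ k a b = thetaD S Δ m := by
  rw [psiEntry, dif_pos h]
  congr 1
  apply S.inj
  rw [hm, (S.surj k (a, b) h).choose_spec]

lemma psiEntry_pos (S : SYTr n r Λ) (Δ : Fin n → ℕ) (m : Fin n) :
    psiEntry S Δ (S.pos m).1 (S.pos m).2.1 (S.pos m).2.2 = thetaD S Δ m :=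
  psiEntry_eq S Δ (S.mem_cells m) rfl

end Tableaux

namespace Tableaux

open Finset

variable {n r : ℕ} {Λ : Fin r → YoungDiagram}

/-- The inverse map: build a reverse semi-standard tableau from `(S, Δ)`. -/
noncomputable def psi (hr : 0 < r) (S : SYTr n r Λ) (Δ : Fin n → ℕ) : RSSYTr n r Λ where
  entry := psiEntry S Δ
  pos_entry := by
    intro k i j h
    rw [psiEntry, dif_pos h]
    exact thetaD_pos S Δ _
  zero_entry := by
    intro k i j h
    rw [psiEntry, dif_neg h]
  row_weak := by
    intro k i j1 j2 hj hmem2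
    rcases Nat.eq_or_lt_of_le hj with rfl | hjlt
    · exact le_rfl
    · have hmem1 : (i, j1) ∈ Λ k := (Λ k).up_left_mem le_rfl hj hmem2
      obtain ⟨m1, hm1⟩ := S.surj k (i, j1) hmem1
      obtain ⟨m2, hm2⟩ := S.surj k (i, j2) hmem2
      rw [psiEntry_eq S Δ hmem1 hm1, psiEntry_eq S Δ hmem2 hm2]
      have hlt : m1 < m2 := S.row_inc m1 m2 (by rw [hm1, hm2]) (by rw [hm1, hm2])
        (by rw [hm1, hm2]; exact hjlt)
      exact thetaD_le_of_le S Δ hlt.le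
  col_strict := by
    intro k i1 i2 j hi hmem2
    have hmem1 : (i1, j) ∈ Λ k := (Λ k).up_left_mem hi.le le_rfl hmem2
    obtain ⟨m1, hm1⟩ := S.surj k (i1, j) hmem1
    obtain ⟨m2, hm2⟩ := S.surj k (i2, j) hmem2
    rw [psiEntry_eq S Δ hmem1 hm1, psiEntry_eq S Δ hmem2 hm2]
    have hlt : m1 < m2 := S.col_inc m1 m2 (by rw [hm1, hm2]) (by rw [hm1, hm2])
      (by rw [hm1, hm2]; exact hi)
    exact thetaD_strict_below S Δ m1 m2 hlt
      (Or.inr ⟨by rw [hm1, hm2], by rw [hm1, hm2]; exact hi⟩)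
  congr_mod := by
    intro k i j h
    obtain ⟨m, hm⟩ := S.surj k (i, j) h
    rw [psiEntry_eq S Δ h hm, thetaD_mod, hm]

lemma psi_entry_pos (hr : 0 < r) (S : SYTr n r Λ) (Δ : Fin n → ℕ) (m : Fin n) :
    (psi hr S Δ).entry (S.pos m).1 (S.pos m).2.1 (S.pos m).2.2 = thetaD S Δ m :=
  psiEntry_pos S Δ m

lemma thetaP_psi (hr : 0 < r) (S : SYTr n r Λ) (Δ : Fin n → ℕ) (m : Fin n) :
    thetaP Λ (psi hr S Δ) (m : ℕ) = thetaD S Δ m := by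
  rw [thetaP_eq_of_mono (psi hr S Δ) S
    (fun a b hab => by rw [psi_entry_pos, psi_entry_pos]; exact thetaD_le_of_le S Δ hab)]
  exact psi_entry_pos hr S Δ m

lemma RSSYTr.ext' {T T' : RSSYTr n r Λ} (h : T.entry = T'.entry) : T = T' := by
  cases T; cases T'; simp only at h; subst h; rfl

lemma SYTr.ext' {S S' : SYTr n r Λ} (h : S.pos = S'.pos) : S = S' := by
  cases S; cases S'; simp only at h; subst h; rfl

end Tableaux

namespace Tableaux

open Finset

variable {n r : ℕ} {Λ : Fin r → YoungDiagram}

/-- Along any `(S, Δ)`, the keys of the cells of `psi S Δ` are strictly increasing in the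
entry index: `S` is THE standardization of `psi S Δ`. -/
lemma key_strictMono_psi (hr : 0 < r) (S : SYTr n r Λ) (Δ : Fin n → ℕ) :
    StrictMono (fun m : Fin n => keyT (psi hr S Δ) (S.pos m)) := by
  intro m m' hmm'
  set T := psi hr S Δ with hT
  have hem : T.entry (S.pos m).1 (S.pos m).2.1 (S.pos m).2.2 = thetaD S Δ m :=
    psi_entry_pos hr S Δ m
  have hem' : T.entry (S.pos m').1 (S.pos m').2.1 (S.pos m').2.2 = thetaD S Δ m' :=
    psi_entry_pos hr S Δ m'
  rw [keyT_lt_iff, hem, hem']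
  have hle : thetaD S Δ m' ≤ thetaD S Δ m := thetaD_le_of_le S Δ hmm'.le
  rcases Nat.eq_or_lt_of_le hle with heq | hlt
  swap
  · exact Or.inl hlt
  · refine Or.inr ⟨heq.symm, ?_⟩
    -- equal values: same component, and no descent in between
    have hcomp : (S.pos m).1 = (S.pos m').1 := by
      apply comp_mod_inj
      rw [← thetaD_mod S Δ m, ← thetaD_mod S Δ m', heq]
    have hnd : ∀ j : ℕ, (m : ℕ) ≤ j → j + 1 ≤ (m' : ℕ) → ¬ isDescT S.pos j := by
      intro j hj1 hj2 hdesc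
      have hjn : j + 1 < n := by have := m'.2; omega
      have h1 := (thetaD_step S Δ hjn).2 hdesc
      have h2 : thetaD S Δ ⟨j, by omega⟩ ≤ thetaD S Δ m :=
        thetaD_le_of_le S Δ (Fin.le_def.mpr (by simp; omega))
      have h3 : thetaD S Δ m' ≤ thetaD S Δ ⟨j + 1, hjn⟩ :=
        thetaD_le_of_le S Δ (Fin.le_def.mpr (by simp; omega))
      omega
    have hchain := chain_nondesc S ((m' : ℕ) - (m : ℕ)) m m'
      (by have := Fin.le_def.mp hmm'.le; omega) hnd
    have hrow : (S.pos m').2.1 ≤ (S.pos m).2.1 := hchain.2 hcomp.symm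
    -- now show the column strictly increases
    by_contra hcol
    push_neg at hcol
    rcases Nat.eq_or_lt_of_le hrow with hroweq | hrowlt
    · rcases Nat.eq_or_lt_of_le hcol with hcoleq | hcollt
      · have : S.pos m = S.pos m' := by
          apply Prod.ext hcomp
          apply Prod.ext hroweq.symm hcoleq.symm
        exact absurd (S.inj this) (ne_of_lt hmm')
      · exact absurd (S.row_inc m' m hcomp.symm hroweq hcollt) (not_lt_of_gt hmm')
    · -- row m' < row m, col m' ≤ col m: contradiction with RSSYT axioms of T
      set k := (S.pos m).1
      have hcellm : ((S.pos m).2.1, (S.pos m).2.2) ∈ Λ k := S.mem_cells m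
      have hcellx : ((S.pos m').2.1, (S.pos m).2.2) ∈ Λ k :=
        (Λ k).up_left_mem hrowlt.le le_rfl hcellm
      have e1 : T.entry k (S.pos m).2.1 (S.pos m).2.2 <
          T.entry k (S.pos m').2.1 (S.pos m).2.2 :=
        T.col_strict k (S.pos m').2.1 (S.pos m).2.1 (S.pos m).2.2 hrowlt hcellm
      have e2 : T.entry k (S.pos m').2.1 (S.pos m).2.2 ≤
          T.entry k (S.pos m').2.1 (S.pos m').2.2 := by
        apply T.row_weak k (S.pos m').2.1 (S.pos m').2.2 (S.pos m).2.2 hcol hcellx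
      rw [hem] at e1
      have hk' : T.entry k (S.pos m').2.1 (S.pos m').2.2 = thetaD S Δ m' := by
        rw [hcomp]; exact hem'
      rw [hk'] at e2
      omega

lemma keyT_mem_image (hr : 0 < r) (T : RSSYTr n r Λ) (S : SYTr n r Λ) (m : Fin n) :
    keyT T (S.pos m) ∈ (cellsF r Λ).image (keyT T) :=
  Finset.mem_image_of_mem _ (mem_cellsF.mpr (S.mem_cells m))

lemma card_key_image (hr : 0 < r) (T : RSSYTr n r Λ)
    (hcard : ∑ k : Fin r, (Λ k).card = n) :
    ((cellsF r Λ).image (keyT T)).card = n := by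
  rw [Finset.card_image_of_injOn (fun p hp q hq h => keyT_injOn hr T hp hq h),
    card_cellsF hcard]

/-- The standardization is unique: any `S` whose keys are strictly monotone must agree
with the canonical enumeration. -/
lemma pos_eq_orderEmb (hr : 0 < r) (T : RSSYTr n r Λ) (S : SYTr n r Λ)
    (hcard : ∑ k : Fin r, (Λ k).card = n)
    (hmono : StrictMono (fun m : Fin n => keyT T (S.pos m))) :
    (fun m : Fin n => keyT T (S.pos m)) =
      ((cellsF r Λ).image (keyT T)).orderEmbOfFin (card_key_image hr T hcard) :=
  Finset.orderEmbOfFin_unique (card_key_image hr T hcard)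
    (fun m => keyT_mem_image hr T S m) hmono

lemma thetaD_inj (hr : 0 < r) (S : SYTr n r Λ) {Δ Δ' : Fin n → ℕ}
    (h : ∀ m : Fin n, thetaD S Δ m = thetaD S Δ' m) : Δ = Δ' := by
  have hsum : ∀ m : Fin n,
      ∑ j ∈ Finset.univ.filter (fun j : Fin n => m ≤ j), Δ j =
        ∑ j ∈ Finset.univ.filter (fun j : Fin n => m ≤ j), Δ' j := by
    intro m
    have := h m
    rw [thetaD, thetaD] at this
    exact Nat.eq_of_mul_eq_mul_left hr (by omega)
  funext m
  by_cases hm : (m : ℕ) + 1 < n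
  · have h1 := hsum m
    have h2 := hsum ⟨(m : ℕ) + 1, hm⟩
    rw [sum_ge_split hm Δ, sum_ge_split hm Δ'] at h1
    omega
  · have h1 := hsum m
    rw [filter_ge_last hm, Finset.sum_singleton, Finset.sum_singleton] at h1
    exact h1

lemma psi_injective (hr : 0 < r) (hcard : ∑ k : Fin r, (Λ k).card = n)
    {S S' : SYTr n r Λ} {Δ Δ' : Fin n → ℕ} (h : psi hr S Δ = psi hr S' Δ') :
    S = S' ∧ Δ = Δ' := by
  set T := psi hr S Δ with hT
  have hmono : StrictMono (fun m : Fin n => keyT T (S.pos m)) := key_strictMono_psi hr S Δ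
  have hmono' : StrictMono (fun m : Fin n => keyT T (S'.pos m)) := by
    rw [h]; exact key_strictMono_psi hr S' Δ'
  have he1 := pos_eq_orderEmb hr T S hcard hmono
  have he2 := pos_eq_orderEmb hr T S' hcard hmono'
  have hpos : S.pos = S'.pos := by
    funext m
    apply keyT_injOn hr T (mem_cellsF.mpr (S.mem_cells m)) (mem_cellsF.mpr (S'.mem_cells m))
    have := congrFun he1 m
    rw [congrFun he1 m, congrFun he2 m]
  have hS : S = S' := SYTr.ext' hpos
  subst hS
  refine ⟨rfl, thetaD_inj hr S (fun m => ?_)⟩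
  rw [← psi_entry_pos hr S Δ m, ← psi_entry_pos hr S Δ' m, ← hT, h]

end Tableaux

namespace Tableaux

open Finset

variable {n r : ℕ} {Λ : Fin r → YoungDiagram}

/-- The canonical standardization position map of a reverse tableau `T`. -/
noncomputable def stdPos (hr : 0 < r) (T : RSSYTr n r Λ)
    (hcard : ∑ k : Fin r, (Λ k).card = n) : Fin n → Fin r × ℕ × ℕ := fun m =>
  (Finset.mem_image.mp
    (Finset.orderEmbOfFin_mem _ (card_key_image hr T hcard) m)).choose

lemma stdPos_spec (hr : 0 < r) (T : RSSYTr n r Λ)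
    (hcard : ∑ k : Fin r, (Λ k).card = n) (m : Fin n) :
    stdPos hr T hcard m ∈ cellsF r Λ ∧
      keyT T (stdPos hr T hcard m) =
        ((cellsF r Λ).image (keyT T)).orderEmbOfFin (card_key_image hr T hcard) m :=
  (Finset.mem_image.mp
    (Finset.orderEmbOfFin_mem _ (card_key_image hr T hcard) m)).choose_spec

lemma stdPos_lt_iff (hr : 0 < r) (T : RSSYTr n r Λ)
    (hcard : ∑ k : Fin r, (Λ k).card = n) (m m' : Fin n) :
    keyT T (stdPos hr T hcard m) < keyT T (stdPos hr T hcard m') ↔ m < m' := by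
  rw [(stdPos_spec hr T hcard m).2, (stdPos_spec hr T hcard m').2]
  exact (Finset.orderEmbOfFin _ _).lt_iff_lt

/-- The standardization of `T` as a standard Young `r`-tableau. -/
noncomputable def stdS (hr : 0 < r) (T : RSSYTr n r Λ)
    (hcard : ∑ k : Fin r, (Λ k).card = n) : SYTr n r Λ where
  pos := stdPos hr T hcard
  mem_cells := fun m => mem_cellsF.mp (stdPos_spec hr T hcard m).1
  inj := by
    intro m m' h
    have hsp := (stdPos_spec hr T hcard m).2
    rw [h, (stdPos_spec hr T hcard m').2] at hsp
    exact (((cellsF r Λ).image (keyT T)).orderEmbOfFin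
      (card_key_image hr T hcard)).injective hsp.symm
  surj := by
    intro k c hc
    have hp : ((k, c.1, c.2) : Fin r × ℕ × ℕ) ∈ cellsF r Λ := mem_cellsF.mpr (by simpa using hc)
    have hk : keyT T (k, c.1, c.2) ∈ (cellsF r Λ).image (keyT T) :=
      Finset.mem_image_of_mem _ hp
    have hrange : ∃ m : Fin n, ((cellsF r Λ).image (keyT T)).orderEmbOfFin
        (card_key_image hr T hcard) m = keyT T (k, c.1, c.2) := by
      have hmem : keyT T (k, c.1, c.2) ∈ Set.range
          ((((cellsF r Λ).image (keyT T)).orderEmbOfFin (card_key_image hr T hcard))) := by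
        rw [Finset.range_orderEmbOfFin]
        exact Finset.mem_coe.mpr hk
      exact hmem
    obtain ⟨m, hm⟩ := hrange
    refine ⟨m, ?_⟩
    apply keyT_injOn hr T (stdPos_spec hr T hcard m).1 hp
    rw [(stdPos_spec hr T hcard m).2, hm]
  row_inc := by
    intro i j hcomp hrow hcol
    rw [← stdPos_lt_iff hr T hcard, keyT_lt_iff]
    set p := stdPos hr T hcard i
    set q := stdPos hr T hcard j
    have hmemq : (q.2.1, q.2.2) ∈ Λ q.1 := mem_cellsF.mp (stdPos_spec hr T hcard j).1
    have hle : T.entry q.1 q.2.1 q.2.2 ≤ T.entry p.1 p.2.1 p.2.2 := by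
      have h2 := T.row_weak q.1 q.2.1 p.2.2 q.2.2 hcol.le hmemq
      have h3 : T.entry q.1 q.2.1 p.2.2 = T.entry p.1 p.2.1 p.2.2 := by rw [hcomp, hrow]
      exact le_of_le_of_eq h2 h3
    rcases Nat.eq_or_lt_of_le hle with heq | hlt
    · exact Or.inr ⟨heq.symm, hcol⟩
    · exact Or.inl hlt
  col_inc := by
    intro i j hcomp hcol hrow
    rw [← stdPos_lt_iff hr T hcard, keyT_lt_iff]
    set p := stdPos hr T hcard i
    set q := stdPos hr T hcard j
    have hmemq : (q.2.1, q.2.2) ∈ Λ q.1 := mem_cellsF.mp (stdPos_spec hr T hcard j).1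
    refine Or.inl ?_
    have h2 := T.col_strict q.1 p.2.1 q.2.1 q.2.2 hrow hmemq
    have h3 : T.entry q.1 p.2.1 q.2.2 = T.entry p.1 p.2.1 p.2.2 := by rw [hcomp, hcol]
    exact lt_of_lt_of_eq h2 h3

lemma stdS_entry_antitone (hr : 0 < r) (T : RSSYTr n r Λ)
    (hcard : ∑ k : Fin r, (Λ k).card = n) {m m' : Fin n} (h : m ≤ m') :
    T.entry ((stdS hr T hcard).pos m').1 ((stdS hr T hcard).pos m').2.1
        ((stdS hr T hcard).pos m').2.2 ≤
      T.entry ((stdS hr T hcard).pos m).1 ((stdS hr T hcard).pos m).2.1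
        ((stdS hr T hcard).pos m).2.2 := by
  rcases Nat.eq_or_lt_of_le h with heq | hlt
  · rw [show m = m' from Fin.ext heq]
  · have := (stdPos_lt_iff hr T hcard m m').mpr hlt
    rw [keyT_lt_iff] at this
    rcases this with h1 | ⟨h1, -⟩
    · exact h1.le
    · exact le_of_eq h1.symm

end Tableaux

namespace Tableaux

open Finset

variable {n r : ℕ} {Λ : Fin r → YoungDiagram}

/-- Extended entry sequence (`1` past the end). -/
def ThE (T : RSSYTr n r Λ) (S : SYTr n r Λ) (i : ℕ) : ℕ :=
  if h : i < n then T.entry (S.pos ⟨i, h⟩).1 (S.pos ⟨i, h⟩).2.1 (S.pos ⟨i, h⟩).2.2 else 1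

/-- Extended `f` sequence (`0` past the end). -/
def FF (S : SYTr n r Λ) (i : ℕ) : ℕ :=
  if h : i < n then fT S.pos ⟨i, h⟩ else 0

/-- The `Δ`-sequence extracted from a reverse tableau and its standardization. -/
def ΔE (T : RSSYTr n r Λ) (S : SYTr n r Λ) (m : Fin n) : ℕ :=
  (ThE T S (m : ℕ) + FF S ((m : ℕ) + 1) - (ThE T S ((m : ℕ) + 1) + FF S (m : ℕ))) / r

lemma FF_mod (S : SYTr n r Λ) {i : ℕ} (hi : i < n) :
    FF S i % r = ((S.pos ⟨i, hi⟩).1 : ℕ) % r := by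
  rw [FF, dif_pos hi, fT, Nat.mul_add_mod]

/-- The fundamental step inequality and congruence for the standardization of `T`. -/
lemma std_step (hr : 0 < r) (T : RSSYTr n r Λ) (hcard : ∑ k : Fin r, (Λ k).card = n) :
    ∀ i : ℕ, i < n →
      ThE T (stdS hr T hcard) (i + 1) + FF (stdS hr T hcard) i ≤
          ThE T (stdS hr T hcard) i + FF (stdS hr T hcard) (i + 1) ∧
        (ThE T (stdS hr T hcard) i + FF (stdS hr T hcard) (i + 1)) % r =
          (ThE T (stdS hr T hcard) (i + 1) + FF (stdS hr T hcard) i) % r := by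
  intro i hi
  set S := stdS hr T hcard with hSdef
  have hThEi : ThE T S i = T.entry (S.pos ⟨i, hi⟩).1 (S.pos ⟨i, hi⟩).2.1
      (S.pos ⟨i, hi⟩).2.2 := dif_pos hi
  have hFFi : FF S i = fT S.pos ⟨i, hi⟩ := dif_pos hi
  set i₀ : Fin n := ⟨i, hi⟩ with hi₀
  set p := S.pos i₀ with hp
  set θ₀ := T.entry p.1 p.2.1 p.2.2 with hθ₀
  have hmemp : (p.2.1, p.2.2) ∈ Λ p.1 := S.mem_cells i₀
  have hmod₀ : θ₀ % r = ((p.1 : ℕ) + 1) % r := T.congr_mod _ _ _ hmemp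
  have hcr₀ : ((p.1 : ℕ)) < r := p.1.2
  by_cases h1 : i + 1 < n
  · -- main case
    set i₁ : Fin n := ⟨i + 1, h1⟩ with hi₁
    set q := S.pos i₁ with hq
    set θ₁ := T.entry q.1 q.2.1 q.2.2 with hθ₁
    have hThEi1 : ThE T S (i + 1) = θ₁ := dif_pos h1
    have hFFi1 : FF S (i + 1) = fT S.pos i₁ := dif_pos h1
    have hmemq : (q.2.1, q.2.2) ∈ Λ q.1 := S.mem_cells i₁
    have hmod₁ : θ₁ % r = ((q.1 : ℕ) + 1) % r := T.congr_mod _ _ _ hmemq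
    have hcr₁ : ((q.1 : ℕ)) < r := q.1.2
    have hkey : keyT T p < keyT T q := by
      rw [hp, hq, hSdef]
      exact (stdPos_lt_iff hr T hcard i₀ i₁).mpr (by rw [Fin.lt_def]; simp [hi₀, hi₁])
    rw [keyT_lt_iff] at hkey
    have hθle : θ₁ ≤ θ₀ := by
      rcases hkey with h | ⟨h, -⟩
      · exact h.le
      · exact le_of_eq h.symm
    -- congruence of A = θ₀ + c₁ and B = θ₁ + c₀
    have hABmod : (θ₀ + (q.1 : ℕ)) % r = (θ₁ + (p.1 : ℕ)) % r := by
      have m1 : (θ₀ + (q.1 : ℕ)) % r = ((p.1 : ℕ) + 1 + (q.1 : ℕ)) % r :=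
        Nat.ModEq.add_right _ hmod₀
      have m2 : (θ₁ + (p.1 : ℕ)) % r = ((q.1 : ℕ) + 1 + (p.1 : ℕ)) % r :=
        Nat.ModEq.add_right _ hmod₁
      rw [m1, m2, show (p.1 : ℕ) + 1 + (q.1 : ℕ) = (q.1 : ℕ) + 1 + (p.1 : ℕ) by ring]
    -- congruence of the actual goal
    have hmodgoal : (ThE T S i + FF S (i + 1)) % r = (ThE T S (i + 1) + FF S i) % r := by
      rw [hThEi, hThEi1]
      have f0 : FF S i % r = (p.1 : ℕ) % r := FF_mod S hi
      have f1 : FF S (i + 1) % r = (q.1 : ℕ) % r := FF_mod S h1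
      have e1 : (θ₀ + FF S (i + 1)) % r = (θ₀ + (q.1 : ℕ)) % r := Nat.ModEq.add_left _ f1
      have e2 : (θ₁ + FF S i) % r = (θ₁ + (p.1 : ℕ)) % r := Nat.ModEq.add_left _ f0
      rw [e1, e2]; exact hABmod
    refine ⟨?_, hmodgoal⟩
    by_cases hd : isDescT S.pos i
    · -- descent
      have hstep : fT S.pos i₀ + (q.1 : ℕ) = fT S.pos i₁ + r + (p.1 : ℕ) :=
        fT_step_desc S h1 hd
      have hAgtB : θ₁ + (p.1 : ℕ) < θ₀ + (q.1 : ℕ) := by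
        obtain ⟨h', hor⟩ := hd
        have hor' : p.1 < q.1 ∨ (p.1 = q.1 ∧ p.2.1 < q.2.1) := hor
        rcases hor' with hc | ⟨hc, hrowlt⟩
        · have := Fin.lt_def.mp hc
          omega
        · -- same component, strictly lower row: entries must strictly decrease
          have hθlt : θ₁ < θ₀ := by
            rcases Nat.eq_or_lt_of_le hθle with heq | hlt
            · exfalso
              have hcol : p.2.2 < q.2.2 := by
                rcases hkey with hk | ⟨-, hk⟩
                · omega
                · exact hk
              have hmemx : (p.2.1, q.2.2) ∈ Λ q.1 :=
                (Λ q.1).up_left_mem hrowlt.le le_rfl hmemq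
              have e1 : θ₁ < T.entry q.1 p.2.1 q.2.2 :=
                T.col_strict q.1 p.2.1 q.2.1 q.2.2 hrowlt hmemq
              have e2 := T.row_weak q.1 p.2.1 p.2.2 q.2.2 hcol.le hmemx
              have e3 : T.entry q.1 p.2.1 p.2.2 = θ₀ := by rw [hθ₀, hc]
              rw [e3] at e2
              omega
            · exact hlt
          have := congrArg Fin.val hc
          omega
      have hBr := mod_eq_of_lt_add (r := r) hr hABmod hAgtB
      rw [hThEi, hThEi1, hFFi, hFFi1]
      omega
    · -- no descent
      obtain ⟨hstep, hcle, -⟩ := fT_step_nondesc S h1 hd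
      have hstep' : fT S.pos i₀ + (q.1 : ℕ) = fT S.pos i₁ + (p.1 : ℕ) := hstep
      have hcle' : ((q.1 : ℕ)) ≤ (p.1 : ℕ) := hcle
      have hAgeB : θ₁ + (p.1 : ℕ) ≤ θ₀ + (q.1 : ℕ) := by
        by_contra hAB
        push_neg at hAB
        have := mod_eq_of_lt_add (r := r) hr hABmod.symm hAB
        omega
      rw [hThEi, hThEi1, hFFi, hFFi1]
      omega
  · -- boundary case: i + 1 = n
    have hThE1 : ThE T S (i + 1) = 1 := dif_neg h1
    have hFF1 : FF S (i + 1) = 0 := dif_neg h1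
    have hFFc : FF S i = (p.1 : ℕ) := by
      rw [hFFi, fT]
      have hd0 : dT S.pos ((i₀ : ℕ) + 1) = 0 := by
        rw [show ((i₀ : ℕ) + 1) = n by simp [hi₀]; omega]
        exact dT_last S.pos
      rw [hd0, Nat.mul_zero, Nat.zero_add]
    have hθpos : 0 < θ₀ := T.pos_entry _ _ _ hmemp
    have hθge : (p.1 : ℕ) + 1 ≤ θ₀ := by
      by_contra hcon
      push_neg at hcon
      have hθr : θ₀ % r = θ₀ := Nat.mod_eq_of_lt (by omega)
      have hc1 : ((p.1 : ℕ) + 1) % r = if (p.1 : ℕ) + 1 = r then 0 else (p.1 : ℕ) + 1 := by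
        split
        · simp_all
        · exact Nat.mod_eq_of_lt (by omega)
      rw [hθr, hc1] at hmod₀
      split at hmod₀ <;> omega
    constructor
    · rw [hThE1, hThEi, hFFc, hFF1]
      omega
    · rw [hThE1, hThEi, hFFc, hFF1, Nat.add_zero]
      have he : (1 + (p.1 : ℕ)) % r = ((p.1 : ℕ) + 1) % r := by rw [Nat.add_comm]
      rw [he]
      exact hmod₀

end Tableaux

namespace Tableaux

open Finset

variable {n r : ℕ} {Λ : Fin r → YoungDiagram}

lemma sum_ge_split_nat {i : ℕ} (hi : i < n) (g : Fin n → ℕ) :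
    ∑ j ∈ Finset.univ.filter (fun j : Fin n => i ≤ (j : ℕ)), g j =
      g ⟨i, hi⟩ + ∑ j ∈ Finset.univ.filter (fun j : Fin n => i + 1 ≤ (j : ℕ)), g j := by
  have hsplit : (Finset.univ.filter fun j : Fin n => i ≤ (j : ℕ)) =
      insert (⟨i, hi⟩ : Fin n) (Finset.univ.filter fun j : Fin n => i + 1 ≤ (j : ℕ)) := by
    ext j
    simp only [Finset.mem_filter, Finset.mem_univ, true_and, Finset.mem_insert]
    constructor
    · intro hij
      rcases Nat.eq_or_lt_of_le hij with he | hlt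
      · exact Or.inl (Fin.ext he.symm)
      · exact Or.inr hlt
    · rintro (rfl | hij)
      · exact le_rfl
      · omega
  rw [hsplit, Finset.sum_insert (by simp)]

lemma sum_ge_empty {i : ℕ} (hi : n ≤ i) (g : Fin n → ℕ) :
    ∑ j ∈ Finset.univ.filter (fun j : Fin n => i ≤ (j : ℕ)), g j = 0 := by
  rw [show (Finset.univ.filter fun j : Fin n => i ≤ (j : ℕ)) = ∅ from ?_, Finset.sum_empty]
  ext j
  simp only [Finset.mem_filter, Finset.mem_univ, true_and, Finset.notMem_empty, iff_false]
  have := j.2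
  omega

/-- Telescoping: from the step inequalities, `ΘE i = 1 + FE i + r·Σ_{j ≥ i} Δ_j`. -/
lemma tele (hr : 0 < r) (T : RSSYTr n r Λ) (S : SYTr n r Λ)
    (hstep : ∀ i : ℕ, i < n →
      ThE T S (i + 1) + FF S i ≤ ThE T S i + FF S (i + 1) ∧
        (ThE T S i + FF S (i + 1)) % r = (ThE T S (i + 1) + FF S i) % r) :
    ∀ t i : ℕ, i + t = n →
      ThE T S i = 1 + FF S i +
        r * ∑ j ∈ Finset.univ.filter (fun j : Fin n => i ≤ (j : ℕ)), ΔE T S j := by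
  intro t
  induction t with
  | zero =>
    intro i hi
    rw [ThE, dif_neg (by omega), FF, dif_neg (by omega), sum_ge_empty (by omega)]
    omega
  | succ t ih =>
    intro i hi
    have hin : i < n := by omega
    have IH := ih (i + 1) (by omega)
    obtain ⟨hle, hmod⟩ := hstep i hin
    have hdvd : r ∣ (ThE T S i + FF S (i + 1)) - (ThE T S (i + 1) + FF S i) :=
      (Nat.modEq_iff_dvd' hle).mp hmod.symm
    have hΔ : r * ΔE T S ⟨i, hin⟩ =
        (ThE T S i + FF S (i + 1)) - (ThE T S (i + 1) + FF S i) := by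
      rw [ΔE]
      exact Nat.mul_div_cancel' hdvd
    rw [sum_ge_split_nat hin, Nat.mul_add, hΔ]
    omega

/-- Surjectivity: `psi` applied to the standardization data of `T` gives back `T`. -/
lemma psi_stdS (hr : 0 < r) (T : RSSYTr n r Λ) (hcard : ∑ k : Fin r, (Λ k).card = n) :
    psi hr (stdS hr T hcard) (ΔE T (stdS hr T hcard)) = T := by
  apply RSSYTr.ext'
  funext k a b
  set S := stdS hr T hcard with hSdef
  show psiEntry S (ΔE T S) k a b = T.entry k a b
  by_cases hmem : (a, b) ∈ Λ k
  · obtain ⟨m, hm⟩ := S.surj k (a, b) hmem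
    rw [psiEntry_eq S _ hmem hm, thetaD]
    have htele := tele hr T S (std_step hr T hcard) (n - (m : ℕ)) (m : ℕ) (by have := m.2; omega)
    have hThE : ThE T S (m : ℕ) = T.entry k a b := by
      rw [ThE, dif_pos m.2, Fin.eta, hm]
    have hFF : FF S (m : ℕ) = fT S.pos m := by
      rw [FF, dif_pos m.2, Fin.eta]
    have hfilter : (Finset.univ.filter fun j : Fin n => m ≤ j) =
        Finset.univ.filter fun j : Fin n => (m : ℕ) ≤ (j : ℕ) := by
      simp only [Fin.le_def]
    rw [hfilter]
    rw [hThE, hFF] at htele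
    omega
  · rw [psiEntry, dif_neg hmem, T.zero_entry k a b hmem]

end Tableaux

open Tableaux in
/-- The map `φ_Λ`, `T ↦ (T', Δ)` with `T'` the standardization of `T`
(entry `i` of `T'` in the cell where `T` has `θ_i`) and
`Δ_i = (θ_i − f_i(T') − θ_{i+1} + f_{i+1}(T'))/r`, is a bijection
`RSSYT(Λ) ≃ SYT(Λ) × ℕ^n`; moreover `θ_i − 1 = f_i(T') + Σ_{j ≥ i} r·Δ_j` for all `i`. -/
theorem rssyt_bijection (n r : ℕ) (hr : 0 < r) (Λ : Fin r → YoungDiagram)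
    (hcard : ∑ k : Fin r, (Λ k).card = n) :
    ∃ φ : RSSYTr n r Λ ≃ SYTr n r Λ × (Fin n → ℕ),
      ∀ T : RSSYTr n r Λ,
        (∀ i : Fin n,
          T.entry ((φ T).1.pos i).1 ((φ T).1.pos i).2.1 ((φ T).1.pos i).2.2 =
            thetaP Λ T (i : ℕ)) ∧
        (∀ i : Fin n,
          thetaP Λ T (i : ℕ) - 1 =
            fT (φ T).1.pos i +
              ∑ j ∈ Finset.univ.filter fun j : Fin n => i ≤ j, r * (φ T).2 j) := by
  classical
  set Ψ : SYTr n r Λ × (Fin n → ℕ) → RSSYTr n r Λ := fun x => psi hr x.1 x.2 with hΨ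
  have hbij : Function.Bijective Ψ := by
    constructor
    · rintro ⟨S, Δ⟩ ⟨S', Δ'⟩ h
      obtain ⟨h1, h2⟩ := psi_injective hr hcard h
      rw [Prod.ext_iff]
      exact ⟨h1, h2⟩
    · intro T
      exact ⟨(stdS hr T hcard, ΔE T (stdS hr T hcard)), psi_stdS hr T hcard⟩
  refine ⟨(Equiv.ofBijective Ψ hbij).symm, ?_⟩
  intro T
  obtain ⟨⟨S, Δ⟩, hT⟩ := hbij.2 T
  subst hT
  have hφ : (Equiv.ofBijective Ψ hbij).symm (Ψ (S, Δ)) = (S, Δ) :=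
    (Equiv.ofBijective Ψ hbij).symm_apply_apply (S, Δ)
  rw [hφ]
  constructor
  · intro i
    show (psi hr S Δ).entry (S.pos i).1 (S.pos i).2.1 (S.pos i).2.2 =
      thetaP Λ (psi hr S Δ) (i : ℕ)
    rw [psi_entry_pos hr S Δ i, thetaP_psi hr S Δ i]
  · intro i
    show thetaP Λ (psi hr S Δ) (i : ℕ) - 1 =
      fT S.pos i + ∑ j ∈ Finset.univ.filter (fun j : Fin n => i ≤ j), r * Δ j
    rw [thetaP_psi hr S Δ i, thetaD, ← Finset.mul_sum]
    omega
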